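/- Let (Ω, μ) be a probability space and let X : Fin n → Ω → ℝ be measurable random variables that are independent (ProbabilityTheory.iIndepFun) with Measure.map (X i) μ = ProbabilityTheory.gaussianReal 0 1 for every i (standard Gaussians). Let a : Fin n → ℝ and let k be a natural number with k ≥ 2. Then ∫ (Σ_i a_i² · (X i ω)²)^k dμ(ω) ≤ k! · (2 · Σ_i a_i²)^k. -/

import Mathlib

open MeasureTheory ProbabilityTheory
open scoped ENNReal NNReal

namespace GaussMomentAux

lemma integrable_pow_mul_exp (m : ℕ) :
    Integrable (fun x : ℝ => x ^ m * Real.exp (-(2⁻¹ : ℝ) * x ^ 2)) := by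
  have h := integrable_rpow_mul_exp_neg_mul_sq (b := (2⁻¹ : ℝ)) (by norm_num)
    (s := (m : ℝ)) (lt_of_lt_of_le (by norm_num) (Nat.cast_nonneg m))
  simpa [Real.rpow_natCast] using h

lemma I_rec (m : ℕ) :
    ∫ x : ℝ, x ^ (m + 2) * Real.exp (-(2⁻¹ : ℝ) * x ^ 2)
      = ((m : ℝ) + 1) * ∫ x : ℝ, x ^ m * Real.exp (-(2⁻¹ : ℝ) * x ^ 2) := by
  set E : ℝ → ℝ := fun x => Real.exp (-(2⁻¹ : ℝ) * x ^ 2) with hE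
  have hderiv : ∀ x : ℝ, HasDerivAt (fun x => x ^ (m + 1) * E x)
      (((m : ℝ) + 1) * (x ^ m * E x) - x ^ (m + 2) * E x) x := by
    intro x
    have h1 : HasDerivAt (fun x : ℝ => x ^ (m + 1)) (((m : ℝ) + 1) * x ^ m) x := by
      simpa using hasDerivAt_pow (m + 1) x
    have h2 : HasDerivAt E (-x * E x) x := by
      have h3 : HasDerivAt (fun x : ℝ => -(2⁻¹ : ℝ) * x ^ 2) (-x) x := by
        have := (hasDerivAt_pow 2 x).const_mul (-(2⁻¹ : ℝ))
        exact this.congr_deriv (by push_cast; ring)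
      have h4 := h3.exp
      rw [hE]
      convert h4 using 1
      ring
    have := h1.mul h2
    exact this.congr_deriv (by ring)
  have hf' : Integrable (fun x : ℝ =>
      ((m : ℝ) + 1) * (x ^ m * E x) - x ^ (m + 2) * E x) :=
    ((integrable_pow_mul_exp m).const_mul _).sub (integrable_pow_mul_exp (m + 2))
  have hzero := integral_eq_zero_of_hasDerivAt_of_integrable hderiv hf'
    (integrable_pow_mul_exp (m + 1))
  rw [integral_sub ((integrable_pow_mul_exp m).const_mul _)
    (integrable_pow_mul_exp (m + 2)), integral_const_mul, sub_eq_zero] at hzero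
  exact hzero.symm

lemma pdf_eq (x : ℝ) :
    gaussianPDFReal 0 1 x = (Real.sqrt (2 * Real.pi))⁻¹ * Real.exp (-(2⁻¹ : ℝ) * x ^ 2) := by
  rw [gaussianPDFReal, NNReal.coe_one, mul_one, mul_one, sub_zero,
    show -x ^ 2 / 2 = -(2⁻¹ : ℝ) * x ^ 2 by ring]

lemma integral_gaussianReal_eq (g : ℝ → ℝ) :
    ∫ x, g x ∂(gaussianReal 0 1) = ∫ x, gaussianPDFReal 0 1 x * g x := by
  rw [gaussianReal_of_var_ne_zero 0 one_ne_zero]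
  have hmeas : Measurable fun x => (gaussianPDFReal 0 1 x).toNNReal :=
    (measurable_gaussianPDFReal 0 1).real_toNNReal
  rw [show gaussianPDF 0 1 = fun x => ((gaussianPDFReal 0 1 x).toNNReal : ℝ≥0∞) from rfl,
    integral_withDensity_eq_integral_smul hmeas]
  refine integral_congr_ae (Filter.Eventually.of_forall fun x => ?_)
  simp [NNReal.smul_def, Real.coe_toNNReal _ (gaussianPDFReal_nonneg 0 1 x)]

lemma integrable_pow_gaussian (m : ℕ) :
    Integrable (fun x : ℝ => x ^ m) (gaussianReal 0 1) := by
  rw [gaussianReal_of_var_ne_zero 0 one_ne_zero]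
  have hmeas : Measurable fun x => (gaussianPDFReal 0 1 x).toNNReal :=
    (measurable_gaussianPDFReal 0 1).real_toNNReal
  rw [show gaussianPDF 0 1 = fun x => ((gaussianPDFReal 0 1 x).toNNReal : ℝ≥0∞) from rfl,
    integrable_withDensity_iff_integrable_smul hmeas]
  have : (fun x : ℝ => ((gaussianPDFReal 0 1 x).toNNReal : ℝ≥0) • x ^ m)
      = fun x : ℝ => (Real.sqrt (2 * Real.pi))⁻¹ * (x ^ m * Real.exp (-(2⁻¹ : ℝ) * x ^ 2)) := by
    funext x
    rw [NNReal.smul_def, smul_eq_mul, Real.coe_toNNReal _ (gaussianPDFReal_nonneg 0 1 x),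
      pdf_eq]
    ring
  rw [this]
  exact (integrable_pow_mul_exp m).const_mul _

lemma moment_rec (m : ℕ) :
    ∫ x, x ^ (m + 2) ∂(gaussianReal 0 1)
      = ((m : ℝ) + 1) * ∫ x, x ^ m ∂(gaussianReal 0 1) := by
  rw [integral_gaussianReal_eq, integral_gaussianReal_eq]
  have h : ∀ j : ℕ, ∫ x, gaussianPDFReal 0 1 x * x ^ j
      = (Real.sqrt (2 * Real.pi))⁻¹ * ∫ x, x ^ j * Real.exp (-(2⁻¹ : ℝ) * x ^ 2) := by
    intro j
    rw [← integral_const_mul]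
    refine integral_congr_ae (Filter.Eventually.of_forall fun x => ?_)
    simp only [pdf_eq]
    ring
  rw [h, h, I_rec]
  ring

lemma even_moment_le (k : ℕ) :
    ∫ x, x ^ (2 * k) ∂(gaussianReal 0 1) ≤ (2 : ℝ) ^ k * k.factorial := by
  induction k with
  | zero => simp
  | succ k ih =>
    have hrec := moment_rec (2 * k)
    have hnn : 0 ≤ ∫ x, x ^ (2 * k) ∂(gaussianReal 0 1) :=
      integral_nonneg fun x => by rw [pow_mul]; positivity
    have h1 : 2 * (k + 1) = 2 * k + 2 := by ring
    rw [h1, hrec]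
    have h2 : ((2 * k : ℕ) : ℝ) + 1 ≤ 2 * ((k : ℝ) + 1) := by push_cast; linarith
    calc (((2 * k : ℕ) : ℝ) + 1) * ∫ x, x ^ (2 * k) ∂(gaussianReal 0 1)
        ≤ (2 * ((k : ℝ) + 1)) * ((2 : ℝ) ^ k * k.factorial) := by
          exact mul_le_mul h2 ih hnn (by positivity)
      _ = (2 : ℝ) ^ (k + 1) * (k + 1).factorial := by
          rw [Nat.factorial_succ]; push_cast; ring

end GaussMomentAux

/-- Moment bound for a weighted sum of squares of independent standard Gaussians:
`E[(Σ a_i² X_i²)^k] ≤ k! (2 Σ a_i²)^k` for `k ≥ 2`. -/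
theorem gaussian_moment_bound {Ω : Type*} [MeasurableSpace Ω] (μ : Measure Ω)
    [IsProbabilityMeasure μ] {n : ℕ} (X : Fin n → Ω → ℝ)
    (hXm : ∀ i, Measurable (X i))
    (hindep : iIndepFun X μ)
    (hgauss : ∀ i, Measure.map (X i) μ = gaussianReal 0 1)
    (a : Fin n → ℝ) (k : ℕ) (hk : 2 ≤ k) :
    ∫ ω, (∑ i, a i ^ 2 * X i ω ^ 2) ^ k ∂μ ≤
      (k.factorial : ℝ) * (2 * ∑ i, a i ^ 2) ^ k := by
  classical
  have hX2 : ∀ i, Integrable (fun ω => X i ω ^ (2 * k)) μ := by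
    intro i
    have h1 : Integrable (fun x : ℝ => x ^ (2 * k)) (Measure.map (X i) μ) := by
      rw [hgauss i]; exact GaussMomentAux.integrable_pow_gaussian _
    have := (integrable_map_measure
      (by fun_prop : AEStronglyMeasurable (fun x : ℝ => x ^ (2 * k)) (Measure.map (X i) μ))
      (hXm i).aemeasurable).mp h1
    exact this
  have hXint : ∀ i, ∫ ω, X i ω ^ (2 * k) ∂μ ≤ (2 : ℝ) ^ k * k.factorial := by
    intro i
    have heq : ∫ ω, X i ω ^ (2 * k) ∂μ = ∫ x, x ^ (2 * k) ∂(Measure.map (X i) μ) := by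
      rw [integral_map (hXm i).aemeasurable (by fun_prop)]
    rw [heq, hgauss i]
    exact GaussMomentAux.even_moment_le k
  set S := ∑ i, a i ^ 2 with hSdef
  have hS0 : 0 ≤ S := Finset.sum_nonneg fun i _ => sq_nonneg _
  have hk0 : k ≠ 0 := by omega
  rcases hS0.eq_or_lt with hS | hS
  · have hai : ∀ i, a i ^ 2 = 0 := by
      intro i
      exact (Finset.sum_eq_zero_iff_of_nonneg (fun i _ => sq_nonneg (a i))).mp hS.symm i
        (Finset.mem_univ i)
    have h1 : ∀ ω : Ω, (∑ i, a i ^ 2 * X i ω ^ 2) = 0 := fun ω =>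
      Finset.sum_eq_zero fun i _ => by rw [hai i, zero_mul]
    simp_rw [h1, zero_pow hk0, integral_zero, ← hS, mul_zero, zero_pow hk0, mul_zero, le_refl]
  · have hpt : ∀ ω : Ω, (∑ i, a i ^ 2 * X i ω ^ 2) ^ k
        ≤ ∑ i, a i ^ 2 * S ^ (k - 1) * X i ω ^ (2 * k) := by
      intro ω
      have hw0 : ∀ i ∈ Finset.univ, 0 ≤ a i ^ 2 / S := fun i _ =>
        div_nonneg (sq_nonneg _) hS0
      have hw1 : ∑ i, a i ^ 2 / S = 1 := by
        rw [← Finset.sum_div, ← hSdef, div_self hS.ne']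
      have hmem : ∀ i ∈ Finset.univ, S * X i ω ^ 2 ∈ Set.Ici (0 : ℝ) := fun i _ =>
        mul_nonneg hS0 (sq_nonneg _)
      have hj := (convexOn_pow k).map_sum_le hw0 hw1 hmem
      have hls : ∑ i, (a i ^ 2 / S) • (S * X i ω ^ 2) = ∑ i, a i ^ 2 * X i ω ^ 2 := by
        refine Finset.sum_congr rfl fun i _ => ?_
        rw [smul_eq_mul]
        field_simp
      have hrs : ∀ i ∈ Finset.univ, (a i ^ 2 / S) • (S * X i ω ^ 2) ^ k
          = a i ^ 2 * S ^ (k - 1) * X i ω ^ (2 * k) := by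
        intro i _
        rw [smul_eq_mul, mul_pow, ← pow_mul, show S ^ k = S * S ^ (k - 1) by
          conv_lhs => rw [show k = 1 + (k - 1) by omega]
          rw [pow_add, pow_one], mul_comm 2 k]
        field_simp
      rw [hls] at hj
      calc (∑ i, a i ^ 2 * X i ω ^ 2) ^ k
          ≤ ∑ i, (a i ^ 2 / S) • (S * X i ω ^ 2) ^ k := hj
        _ = ∑ i, a i ^ 2 * S ^ (k - 1) * X i ω ^ (2 * k) := Finset.sum_congr rfl hrs
    have hg : Integrable (fun ω => ∑ i, a i ^ 2 * S ^ (k - 1) * X i ω ^ (2 * k)) μ :=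
      integrable_finset_sum _ fun i _ => (hX2 i).const_mul _
    have hnn : 0 ≤ᵐ[μ] fun ω => (∑ i, a i ^ 2 * X i ω ^ 2) ^ k :=
      Filter.Eventually.of_forall fun ω => by positivity
    have hle := integral_mono_of_nonneg hnn hg (Filter.Eventually.of_forall hpt)
    refine hle.trans ?_
    rw [integral_finset_sum _ fun i _ => (hX2 i).const_mul _]
    simp_rw [integral_const_mul]
    calc ∑ i, a i ^ 2 * S ^ (k - 1) * ∫ ω, X i ω ^ (2 * k) ∂μ
        ≤ ∑ i, a i ^ 2 * S ^ (k - 1) * ((2 : ℝ) ^ k * k.factorial) := by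
          refine Finset.sum_le_sum fun i _ => ?_
          exact mul_le_mul_of_nonneg_left (hXint i)
            (mul_nonneg (sq_nonneg _) (pow_nonneg hS0 _))
      _ = S ^ (k - 1) * ((2 : ℝ) ^ k * k.factorial) * S := by
          rw [← Finset.sum_mul, ← Finset.sum_mul, ← hSdef]; ring
      _ = (k.factorial : ℝ) * (2 * S) ^ k := by
          rw [mul_pow, show S ^ k = S * S ^ (k - 1) by
            conv_lhs => rw [show k = 1 + (k - 1) by omega]
            rw [pow_add, pow_one]]
          ring
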